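/- The subgroup lattice of ℤ × ℤ/2^N contains no generalized-cyclic-diamond: there do not exist a subgroup H and four cyclic subgroups A, B, C, D with A, B, C pairwise distinct, A ∨ B = A ∨ C = B ∨ C = H, and A ∧ B = A ∧ C = B ∧ C = D. -/

import Mathlib

open AddSubgroup

namespace Stmt18Aux

/-- `2^k` is not a multiple of `2^k'` in `ZMod (2^N)` when `k < N` and `k < k'`. -/
lemma nd {N k k' : ℕ} (hkN : k < N) (hkk' : k < k') :
    ((2^k : ℕ) : ZMod (2^N)) ∉ zmultiples ((2^k' : ℕ) : ZMod (2^N)) := by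
  rintro ⟨j, hj⟩
  beta_reduce at hj
  rw [zsmul_eq_mul] at hj
  have h0 : ((j * 2^k' - 2^k : ℤ) : ZMod (2^N)) = 0 := by
    push_cast
    rw [sub_eq_zero]
    push_cast at hj
    exact hj
  have hdvd : ((2^N : ℕ) : ℤ) ∣ (j * 2^k' - 2^k) :=
    (ZMod.intCast_zmod_eq_zero_iff_dvd _ _).mp h0
  obtain ⟨d, hd⟩ : ∃ d, k' = k + (d+1) := ⟨k' - k - 1, by omega⟩
  set t : ℤ := j * 2^d with ht
  have h2 : (j * 2^k' - 2^k : ℤ) = 2^k * (2*t - 1) := by rw [hd, ht]; ring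
  have hN : ((2^N : ℕ) : ℤ) = 2^k * 2^(N-k) := by push_cast; rw [← pow_add]; congr 1; omega
  rw [hN, h2] at hdvd
  have h3 : (2:ℤ)^(N-k) ∣ (2*t - 1) :=
    (mul_dvd_mul_iff_left (by positivity : (2:ℤ)^k ≠ 0)).mp hdvd
  have h4 : (2:ℤ) ∣ 2*t - 1 := dvd_trans (dvd_pow_self 2 (by omega : N-k ≠ 0)) h3
  omega

/-- multiplying by a unit (coprime natural) does not change zmultiples -/
lemma unit_absorb {n : ℕ} [NeZero n] (w : ZMod n) (m : ℕ) (hm : m.Coprime n) :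
    zmultiples ((m : ZMod n) * w) = zmultiples w := by
  apply le_antisymm
  · rintro _ ⟨j, rfl⟩
    refine ⟨j * m, ?_⟩
    beta_reduce
    rw [zsmul_eq_mul, zsmul_eq_mul]
    push_cast
    ring
  · rintro _ ⟨j, rfl⟩
    obtain ⟨c, hc⟩ := ZMod.intCast_surjective ((m : ZMod n)⁻¹)
    refine ⟨j * c, ?_⟩
    beta_reduce
    rw [zsmul_eq_mul, zsmul_eq_mul]
    have h1 : ((m : ZMod n))⁻¹ * (m : ZMod n) = 1 := by
      rw [mul_comm]; exact ZMod.coe_mul_inv_eq_one m hm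
    push_cast
    rw [mul_comm ((j : ZMod n)) ((c : ZMod n)), mul_assoc, ← mul_assoc (c : ZMod n), hc]
    rw [mul_comm ((m:ZMod n)⁻¹) _, mul_assoc, ← mul_assoc (m : ZMod n)⁻¹ , h1]
    ring

/-- normal form of a nonzero element of `ZMod (2^N)` -/
lemma nf {N : ℕ} (u : ZMod (2^N)) (hu : u ≠ 0) :
    ∃ k < N, (∃ m : ℕ, ¬ 2 ∣ m ∧ u = ((2^k * m : ℕ) : ZMod (2^N))) ∧
      zmultiples u = zmultiples ((2^k : ℕ) : ZMod (2^N)) := by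
  haveI : NeZero (2^N) := ⟨pow_ne_zero _ two_ne_zero⟩
  set n := u.val with hn
  have hn0 : n ≠ 0 := fun h => hu ((ZMod.val_eq_zero u).mp h)
  set k := n.factorization 2 with hk
  set m := n / 2^k with hmdef
  have hodd : ¬ 2 ∣ m := Nat.not_dvd_ordCompl Nat.prime_two hn0
  have hrepn : 2^k * m = n := Nat.ordProj_mul_ordCompl_eq_self n 2
  have hcast : ((n : ℕ) : ZMod (2^N)) = u := by simp [hn, ZMod.natCast_val, ZMod.cast_id]
  have hrep : u = ((2^k * m : ℕ) : ZMod (2^N)) := by rw [hrepn, hcast]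
  have hkN : k < N := by
    have h1 : 2^k ∣ n := Nat.ordProj_dvd n 2
    have h2 : n < 2^N := ZMod.val_lt u
    have h3 : 2^k ≤ n := Nat.le_of_dvd (Nat.pos_of_ne_zero hn0) h1
    exact (Nat.pow_lt_pow_iff_right (by norm_num)).mp (lt_of_le_of_lt h3 h2)
  refine ⟨k, hkN, ⟨m, hodd, hrep⟩, ?_⟩
  have hcop : m.Coprime (2^N) :=
    Nat.Coprime.pow_right _ ((Nat.prime_two.coprime_iff_not_dvd).mpr hodd).symm
  have : ((2^k * m : ℕ) : ZMod (2^N)) = (m : ZMod (2^N)) * ((2^k : ℕ) : ZMod (2^N)) := by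
    push_cast; ring
  rw [hrep, this, unit_absorb _ _ hcop]

/-- comparability of cyclic subgroups of `ZMod (2^N)` -/
lemma comp {N : ℕ} (u v : ZMod (2^N)) : u ∈ zmultiples v ∨ v ∈ zmultiples u := by
  by_cases hu : u = 0
  · left; rw [hu]; exact zero_mem _
  by_cases hv : v = 0
  · right; rw [hv]; exact zero_mem _
  obtain ⟨k, hk, -, hzu⟩ := nf u hu
  obtain ⟨k', hk', -, hzv⟩ := nf v hv
  have pow_mem : ∀ i i' : ℕ, i ≤ i' →
      ((2^i' : ℕ) : ZMod (2^N)) ∈ zmultiples ((2^i : ℕ) : ZMod (2^N)) := by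
    intro i i' h
    refine ⟨((2^(i'-i) : ℕ) : ℤ), ?_⟩
    beta_reduce
    rw [natCast_zsmul, nsmul_eq_mul, ← Nat.cast_mul]
    congr 1
    rw [← pow_add]
    congr 1
    omega
  rcases le_total k k' with h | h
  · right
    rw [hzu]
    have h1 : zmultiples v ≤ zmultiples ((2^k : ℕ) : ZMod (2^N)) := by
      rw [hzv]
      rintro _ ⟨j, rfl⟩
      exact zsmul_mem (pow_mem k k' h) j
    exact h1 (mem_zmultiples v)
  · left
    rw [hzv]
    have h1 : zmultiples u ≤ zmultiples ((2^k' : ℕ) : ZMod (2^N)) := by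
      rw [hzu]
      rintro _ ⟨j, rfl⟩
      exact zsmul_mem (pow_mem k' k h) j
    exact h1 (mem_zmultiples u)

lemma zmul_neg {A : Type*} [AddGroup A] (w : A) : zmultiples (-w) = zmultiples w := by
  apply le_antisymm
  · rintro _ ⟨j, rfl⟩; exact ⟨-j, by simp⟩
  · rintro _ ⟨j, rfl⟩; exact ⟨-j, by simp⟩

/-- key 2-adic lemma -/
lemma keyL {N : ℕ} (u v : ZMod (2^N)) (h1 : zmultiples u = zmultiples v)
    (h2 : zmultiples (u - v) = zmultiples u) : u = 0 := by
  by_contra hu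
  have hv : v ≠ 0 := by
    rintro rfl
    have h3 : u ∈ zmultiples (0 : ZMod (2^N)) := h1 ▸ mem_zmultiples u
    obtain ⟨j, hj⟩ := h3
    beta_reduce at hj
    rw [smul_zero] at hj
    exact hu hj.symm
  obtain ⟨k, hk, ⟨m, hm, hrep⟩, hzu⟩ := nf u hu
  obtain ⟨k', hk', ⟨m', hm', hrep'⟩, hzv⟩ := nf v hv
  have hkk : k = k' := by
    by_contra hne
    rcases Nat.lt_or_ge k k' with h | h
    · refine nd hk h ?_
      have h3 := mem_zmultiples (((2^k : ℕ)) : ZMod (2^N))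
      rwa [← hzu, h1, hzv] at h3
    · have h' : k' < k := by omega
      refine nd hk' h' ?_
      have h3 := mem_zmultiples (((2^k' : ℕ)) : ZMod (2^N))
      rwa [← hzv, ← h1, hzu] at h3
  subst hkk
  obtain ⟨t, ht⟩ : ∃ t : ℤ, (m : ℤ) - m' = 2*t := by
    have h5 : m % 2 = 1 := Nat.two_dvd_ne_zero.mp hm
    have h6 : m' % 2 = 1 := Nat.two_dvd_ne_zero.mp hm'
    refine ⟨((m : ℤ) - m')/2, ?_⟩
    omega
  have hdiff : u - v ∈ zmultiples ((2^(k+1) : ℕ) : ZMod (2^N)) := by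
    have hint : ((2:ℤ)^k * m - 2^k * m') = t * 2^(k+1) := by
      have : (2:ℤ)^k * m - 2^k * m' = 2^k * ((m:ℤ) - m') := by ring
      rw [this, ht]; ring
    refine ⟨t, ?_⟩
    beta_reduce
    rw [zsmul_eq_mul, hrep, hrep']
    have hc := congrArg (fun z : ℤ => (z : ZMod (2^N))) hint
    push_cast at hc ⊢
    linear_combination -hc
  have h4 : ((2^k : ℕ) : ZMod (2^N)) ∈ zmultiples (u - v) := by
    rw [h2, hzu]; exact mem_zmultiples _
  have h5 : ((2^k : ℕ) : ZMod (2^N)) ∈ zmultiples ((2^(k+1) : ℕ) : ZMod (2^N)) := by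
    obtain ⟨j, hj⟩ := h4
    obtain ⟨i, hi⟩ := hdiff
    refine ⟨j * i, ?_⟩
    beta_reduce at hi hj ⊢
    rw [mul_zsmul, hi, hj]
  exact nd hk (Nat.lt_succ_self k) h5




variable {N : ℕ}

/-- which torsion elements lie in a join of two "infinite" cyclic subgroups -/
lemma joinTors (g a' b' : ℤ) (x y : ℤ × ZMod (2^N))
    (hx1 : x.1 = g * a') (hy1 : y.1 = g * b') (hg : g ≠ 0) (hb : b' ≠ 0)
    (hcop : IsCoprime a' b') (t : ZMod (2^N)) :
    ((0 : ℤ), t) ∈ zmultiples x ⊔ zmultiples y ↔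
      t ∈ zmultiples (b' • x.2 - a' • y.2) := by
  constructor
  · intro h
    rw [AddSubgroup.mem_sup] at h
    obtain ⟨p, ⟨k, rfl⟩, q, ⟨l, rfl⟩, hpq⟩ := h
    beta_reduce at hpq
    rw [Prod.ext_iff] at hpq
    obtain ⟨h1, h2⟩ := hpq
    simp only [Prod.fst_add, Prod.snd_add, Prod.smul_fst, Prod.smul_snd, smul_eq_mul] at h1 h2
    rw [hx1, hy1] at h1
    -- h1 : k * (g*a') + l * (g*b') = 0
    have h1' : k * a' + l * b' = 0 := by
      have : g * (k * a' + l * b') = g * 0 := by rw [mul_zero]; linear_combination h1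
      exact mul_left_cancel₀ hg this
    have hbk : b' ∣ k := by
      refine hcop.symm.dvd_of_dvd_mul_right ⟨-l, ?_⟩
      linear_combination h1'
    obtain ⟨s, rfl⟩ := hbk
    have hl : l = -(s * a') := by
      have : b' * l = b' * (-(s * a')) := by linear_combination h1'
      exact mul_left_cancel₀ hb this
    refine ⟨s, ?_⟩
    beta_reduce
    simp only [zsmul_eq_mul] at h2 ⊢
    rw [hl] at h2
    push_cast at h2 ⊢
    linear_combination h2
  · rintro ⟨s, rfl⟩
    beta_reduce
    rw [AddSubgroup.mem_sup]
    refine ⟨(b'*s) • x, zsmul_mem (mem_zmultiples x) _, (-(a'*s)) • y,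
      zsmul_mem (mem_zmultiples y) _, ?_⟩
    rw [Prod.ext_iff]
    constructor
    · simp only [Prod.fst_add, Prod.smul_fst, smul_eq_mul, hx1, hy1]
      ring
    · simp only [Prod.snd_add, Prod.smul_snd]
      simp only [zsmul_eq_mul]
      push_cast
      ring

/-- membership of a multiple of x in the cyclic group generated by y -/
lemma meetMem (g a' b' : ℤ) (x y : ℤ × ZMod (2^N))
    (hx1 : x.1 = g * a') (hy1 : y.1 = g * b') (hg : g ≠ 0) (hb : b' ≠ 0)
    (hcop : IsCoprime a' b') (k : ℤ) :
    k • x ∈ zmultiples y ↔ ((addOrderOf (b' • x.2 - a' • y.2) : ℤ) * b') ∣ k := by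
  haveI : NeZero ((2:ℕ)^N) := ⟨pow_ne_zero _ two_ne_zero⟩
  set e := addOrderOf (b' • x.2 - a' • y.2) with he
  constructor
  · rintro ⟨l, hl⟩
    beta_reduce at hl
    rw [Prod.ext_iff] at hl
    obtain ⟨h1, h2⟩ := hl
    simp only [Prod.smul_fst, Prod.smul_snd, smul_eq_mul] at h1 h2
    rw [hx1, hy1] at h1
    -- h1 : l * (g * b') = k * (g * a')
    have h1' : l * b' = k * a' := by
      have : g * (l * b') = g * (k * a') := by linear_combination h1
      exact mul_left_cancel₀ hg this
    have hbk : b' ∣ k := by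
      refine hcop.symm.dvd_of_dvd_mul_right ⟨l, ?_⟩
      linear_combination -h1'
    obtain ⟨s, rfl⟩ := hbk
    have hls : l = a' * s := by
      have : (a' * s) * b' = l * b' := by linear_combination -h1'
      exact (mul_right_cancel₀ hb this).symm
    have hsu : s • (b' • x.2 - a' • y.2) = 0 := by
      simp only [zsmul_eq_mul] at h2 ⊢
      rw [hls] at h2
      push_cast at h2 ⊢
      linear_combination -h2
    have hdvd : (e : ℤ) ∣ s := he ▸ addOrderOf_dvd_iff_zsmul_eq_zero.mpr hsu
    obtain ⟨c, rfl⟩ := hdvd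
    exact ⟨c, by ring⟩
  · rintro ⟨j, rfl⟩
    have heu : (e : ℤ) • (b' • x.2 - a' • y.2) = 0 := by
      rw [he]; exact addOrderOf_dvd_iff_zsmul_eq_zero.mp dvd_rfl
    refine ⟨(e : ℤ) * a' * j, ?_⟩
    beta_reduce
    rw [Prod.ext_iff]
    constructor
    · simp only [Prod.smul_fst, smul_eq_mul, hx1, hy1]
      ring
    · simp only [Prod.smul_snd]
      simp only [zsmul_eq_mul] at heu ⊢
      push_cast at heu ⊢
      linear_combination (-(j : ZMod (2^N))) * heu


variable {N : ℕ}

lemma norm (p : ℤ × ZMod (2^N)) (hp : p.1 ≠ 0) :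
    ∃ q : ℤ × ZMod (2^N), 0 < q.1 ∧ zmultiples p = zmultiples q := by
  rcases hp.lt_or_gt with h | h
  · refine ⟨-p, by simpa using h, ?_⟩
    apply le_antisymm
    · rintro _ ⟨j, rfl⟩; exact ⟨-j, by simp⟩
    · rintro _ ⟨j, rfl⟩; exact ⟨-j, by simp⟩
  · exact ⟨p, h, rfl⟩

lemma oneZero (x y z : ℤ × ZMod (2^N)) (hx : x.1 = 0) (hy : y.1 ≠ 0) (hz : z.1 ≠ 0)
    (h : zmultiples y ⊓ zmultiples z ≤ zmultiples x) : False := by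
  have h2N : ((2 : ZMod (2^N)))^N = 0 := by
    have := ZMod.natCast_self (2^N)
    push_cast at this
    exact this
  have key : ((2^N * y.1 * z.1 : ℤ), (0 : ZMod (2^N))) ∈ zmultiples y ⊓ zmultiples z := by
    constructor
    · refine ⟨2^N * z.1, ?_⟩
      beta_reduce
      rw [Prod.ext_iff]
      constructor
      · simp only [Prod.smul_fst, smul_eq_mul]; try ring
      · simp only [Prod.smul_snd]
        rw [zsmul_eq_mul]
        push_cast
        rw [h2N]
        ring
    · refine ⟨2^N * y.1, ?_⟩
      beta_reduce
      rw [Prod.ext_iff]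
      constructor
      · simp only [Prod.smul_fst, smul_eq_mul]; try ring
      · simp only [Prod.smul_snd]
        rw [zsmul_eq_mul]
        push_cast
        rw [h2N]
        ring
  obtain ⟨j, hj⟩ := h key
  beta_reduce at hj
  rw [Prod.ext_iff] at hj
  have h1 := hj.1
  simp only [Prod.smul_fst, smul_eq_mul, hx, mul_zero] at h1
  have hne : (2:ℤ)^N * y.1 * z.1 ≠ 0 :=
    mul_ne_zero (mul_ne_zero (by positivity) hy) hz
  exact hne h1.symm

lemma chainCase (x y z : ℤ × ZMod (2^N)) (hx : x.1 = 0) (hy : y.1 = 0)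
    (hAB : zmultiples x ≠ zmultiples y)
    (hJ12 : zmultiples x ⊔ zmultiples y = zmultiples x ⊔ zmultiples z)
    (hJ13 : zmultiples x ⊔ zmultiples y = zmultiples y ⊔ zmultiples z)
    (hM12 : zmultiples x ⊓ zmultiples y = zmultiples x ⊓ zmultiples z)
    (hM13 : zmultiples x ⊓ zmultiples y = zmultiples y ⊓ zmultiples z) : False := by
  have hcmp : x ∈ zmultiples y ∨ y ∈ zmultiples x := by
    rcases comp x.2 y.2 with ⟨s, hs⟩ | ⟨s, hs⟩
    · left
      refine ⟨s, ?_⟩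
      beta_reduce at hs ⊢
      rw [Prod.ext_iff]
      exact ⟨by simp [hy, hx], by simpa using hs⟩
    · right
      refine ⟨s, ?_⟩
      beta_reduce at hs ⊢
      rw [Prod.ext_iff]
      exact ⟨by simp [hy, hx], by simpa using hs⟩
  have hle : zmultiples x ≤ zmultiples y ∨ zmultiples y ≤ zmultiples x := by
    rcases hcmp with h | h
    · left; rintro _ ⟨j, rfl⟩; exact zsmul_mem h j
    · right; rintro _ ⟨j, rfl⟩; exact zsmul_mem h j
  rcases hle with h | h
  · have e1 : zmultiples x ⊔ zmultiples y = zmultiples y := sup_eq_right.mpr h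
    have e2 : zmultiples z ≤ zmultiples y := by
      rw [← e1, hJ13]; exact le_sup_right
    have e3 : zmultiples y ⊓ zmultiples z = zmultiples z := inf_eq_right.mpr e2
    have e4 : zmultiples x ⊓ zmultiples z = zmultiples z := (hM12.symm.trans hM13).trans e3
    have e5 : zmultiples z ≤ zmultiples x := by rw [← e4]; exact inf_le_left
    have e6 : zmultiples x ⊔ zmultiples z = zmultiples x := sup_eq_left.mpr e5
    exact hAB (by rw [← e6, ← hJ12, e1])
  · have e1 : zmultiples x ⊔ zmultiples y = zmultiples x := sup_eq_left.mpr h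
    have e2 : zmultiples z ≤ zmultiples x := by
      rw [← e1, hJ12]; exact le_sup_right
    have e3 : zmultiples x ⊓ zmultiples z = zmultiples z := inf_eq_right.mpr e2
    have e4 : zmultiples y ⊓ zmultiples z = zmultiples z := (hM13.symm.trans hM12).trans e3
    have e5 : zmultiples z ≤ zmultiples y := by rw [← e4]; exact inf_le_left
    have e6 : zmultiples y ⊔ zmultiples z = zmultiples y := sup_eq_left.mpr e5
    exact hAB (by rw [← e1, hJ13, e6])


lemma mainCase (x y z : ℤ × ZMod (2^N)) (hx : 0 < x.1) (hy : 0 < y.1) (hz : 0 < z.1)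
    (hAB : zmultiples x ≠ zmultiples y)
    (hJ12 : zmultiples x ⊔ zmultiples y = zmultiples x ⊔ zmultiples z)
    (hJ13 : zmultiples x ⊔ zmultiples y = zmultiples y ⊔ zmultiples z)
    (hM12 : zmultiples x ⊓ zmultiples y = zmultiples x ⊓ zmultiples z)
    (hM13 : zmultiples x ⊓ zmultiples y = zmultiples y ⊓ zmultiples z) : False := by
  haveI : NeZero ((2:ℕ)^N) := ⟨pow_ne_zero _ two_ne_zero⟩
  -- memberships and decompositions
  have hzmem : z ∈ zmultiples x ⊔ zmultiples y := by
    rw [hJ12]; exact AddSubgroup.mem_sup_right (mem_zmultiples z)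
  have hymem : y ∈ zmultiples x ⊔ zmultiples z := by
    rw [← hJ12]; exact AddSubgroup.mem_sup_right (mem_zmultiples y)
  have hxmem : x ∈ zmultiples y ⊔ zmultiples z := by
    rw [← hJ13]; exact AddSubgroup.mem_sup_left (mem_zmultiples x)
  obtain ⟨k1, l1, hzc⟩ : ∃ k l : ℤ, z.1 = k * x.1 + l * y.1 := by
    obtain ⟨p, ⟨k, rfl⟩, q, ⟨l, rfl⟩, hd⟩ := AddSubgroup.mem_sup.mp hzmem
    exact ⟨k, l, by rw [← hd]; simp [smul_eq_mul]⟩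
  obtain ⟨k2, l2, hyc⟩ : ∃ k l : ℤ, y.1 = k * x.1 + l * z.1 := by
    obtain ⟨p, ⟨k, rfl⟩, q, ⟨l, rfl⟩, hd⟩ := AddSubgroup.mem_sup.mp hymem
    exact ⟨k, l, by rw [← hd]; simp [smul_eq_mul]⟩
  obtain ⟨k3, l3, hxc⟩ : ∃ k l : ℤ, x.1 = k * y.1 + l * z.1 := by
    obtain ⟨p, ⟨k, rfl⟩, q, ⟨l, rfl⟩, hd⟩ := AddSubgroup.mem_sup.mp hxmem
    exact ⟨k, l, by rw [← hd]; simp [smul_eq_mul]⟩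
  -- the common gcd
  have hgN0 : Int.gcd x.1 y.1 ≠ 0 := fun h => hx.ne' (Int.gcd_eq_zero_iff.mp h).1
  set g : ℤ := (Int.gcd x.1 y.1 : ℤ) with hgdef
  have hgpos : 0 < g := by
    rw [hgdef]
    exact_mod_cast Nat.pos_of_ne_zero hgN0
  have hg0 : g ≠ 0 := hgpos.ne'
  have d1 : g ∣ x.1 := (Int.gcd_dvd_left ..)
  have d2 : g ∣ y.1 := (Int.gcd_dvd_right ..)
  have d3 : g ∣ z.1 := by rw [hzc]; exact dvd_add (d1.mul_left k1) (d2.mul_left l1)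
  have hxz : (Int.gcd x.1 z.1 : ℤ) = g := by
    refine Int.dvd_antisymm (Int.natCast_nonneg _) hgpos.le ?_ (Int.dvd_coe_gcd d1 d3)
    refine Int.dvd_coe_gcd (Int.gcd_dvd_left ..) ?_
    rw [hyc]
    exact dvd_add ((Int.gcd_dvd_left ..).mul_left k2) ((Int.gcd_dvd_right ..).mul_left l2)
  have hyz : (Int.gcd y.1 z.1 : ℤ) = g := by
    refine Int.dvd_antisymm (Int.natCast_nonneg _) hgpos.le ?_ (Int.dvd_coe_gcd d2 d3)
    refine Int.dvd_coe_gcd ?_ (Int.gcd_dvd_left ..)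
    rw [hxc]
    exact dvd_add ((Int.gcd_dvd_left ..).mul_left k3) ((Int.gcd_dvd_right ..).mul_left l3)
  -- reduced coordinates
  set a' := x.1 / g with ha'def
  set b' := y.1 / g with hb'def
  set c' := z.1 / g with hc'def
  have hx1 : x.1 = g * a' := (Int.mul_ediv_cancel' d1).symm
  have hy1 : y.1 = g * b' := (Int.mul_ediv_cancel' d2).symm
  have hz1 : z.1 = g * c' := (Int.mul_ediv_cancel' d3).symm
  have hapos : 0 < a' := by
    by_contra hcon
    push_neg at hcon
    nlinarith [hx, hx1, hgpos]
  have hbpos : 0 < b' := by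
    by_contra hcon
    push_neg at hcon
    nlinarith [hy, hy1, hgpos]
  have hcpos : 0 < c' := by
    by_contra hcon
    push_neg at hcon
    nlinarith [hz, hz1, hgpos]
  have ha0 : a' ≠ 0 := hapos.ne'
  have hb0 : b' ≠ 0 := hbpos.ne'
  have hc0 : c' ≠ 0 := hcpos.ne'
  -- coprimality
  have hcab : IsCoprime a' b' := by
    rw [Int.isCoprime_iff_gcd_eq_one]
    exact Int.gcd_div_gcd_div_gcd (Nat.pos_of_ne_zero hgN0)
  have hcac : IsCoprime a' c' := by
    rw [Int.isCoprime_iff_gcd_eq_one]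
    have hpos : 0 < Int.gcd x.1 z.1 := by
      have h' : (0:ℤ) < (Int.gcd x.1 z.1 : ℤ) := hxz ▸ hgpos
      exact_mod_cast h'
    have h := Int.gcd_div_gcd_div_gcd hpos
    rw [hxz] at h
    exact h
  have hcbc : IsCoprime b' c' := by
    rw [Int.isCoprime_iff_gcd_eq_one]
    have hpos : 0 < Int.gcd y.1 z.1 := by
      have h' : (0:ℤ) < (Int.gcd y.1 z.1 : ℤ) := hyz ▸ hgpos
      exact_mod_cast h'
    have h := Int.gcd_div_gcd_div_gcd hpos
    rw [hyz] at h
    exact h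
  -- equal torsion subgroups from equal joins
  have hU12 : zmultiples (b' • x.2 - a' • y.2) = zmultiples (c' • x.2 - a' • z.2) := by
    ext t
    rw [← joinTors g a' b' x y hx1 hy1 hg0 hb0 hcab t,
        ← joinTors g a' c' x z hx1 hz1 hg0 hc0 hcac t, hJ12]
  have hU13 : zmultiples (b' • x.2 - a' • y.2) = zmultiples (c' • y.2 - b' • z.2) := by
    ext t
    rw [← joinTors g a' b' x y hx1 hy1 hg0 hb0 hcab t,
        ← joinTors g b' c' y z hy1 hz1 hg0 hc0 hcbc t, hJ13]
  -- equal orders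
  have hkey : ∀ (w w' : ZMod (2^N)), zmultiples w = zmultiples w' → addOrderOf w' ∣ addOrderOf w := by
    intro w w' h
    obtain ⟨s, hs⟩ : w' ∈ zmultiples w := h ▸ mem_zmultiples w'
    beta_reduce at hs
    have h0 : (addOrderOf w : ℤ) • w = 0 := addOrderOf_dvd_iff_zsmul_eq_zero.mp dvd_rfl
    have h2 : (addOrderOf w : ℤ) • w' = 0 := by
      rw [← hs, ← mul_zsmul, mul_comm, mul_zsmul, h0, smul_zero]
    exact Int.natCast_dvd_natCast.mp (addOrderOf_dvd_iff_zsmul_eq_zero.mpr h2)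
  have hordeq : ∀ (w w' : ZMod (2^N)), zmultiples w = zmultiples w' → addOrderOf w = addOrderOf w' :=
    fun w w' h => Nat.dvd_antisymm (hkey w' w h.symm) (hkey w w' h)
  set e := addOrderOf (b' • x.2 - a' • y.2) with hedef
  have he2 : addOrderOf (c' • x.2 - a' • z.2) = e := (hordeq _ _ hU12).symm
  have he3 : addOrderOf (c' • y.2 - b' • z.2) = e := (hordeq _ _ hU13).symm
  have he4 : addOrderOf (a' • y.2 - b' • x.2) = e := by
    rw [show a' • y.2 - b' • x.2 = -(b' • x.2 - a' • y.2) from (neg_sub _ _).symm, addOrderOf_neg]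
  have he0 : (e : ℤ) ≠ 0 := by
    have hpos := addOrderOf_pos (b' • x.2 - a' • y.2)
    rw [← hedef] at hpos
    exact_mod_cast hpos.ne'
  -- x-side: b' = c'
  have s1 : ((e:ℤ) * b') • x ∈ zmultiples x ⊓ zmultiples z := by
    rw [← hM12]
    exact ⟨zsmul_mem (mem_zmultiples x) _,
      (meetMem g a' b' x y hx1 hy1 hg0 hb0 hcab _).mpr (by rw [← hedef])⟩
  have s1' : (e:ℤ) * c' ∣ (e:ℤ) * b' := by
    have h := (meetMem g a' c' x z hx1 hz1 hg0 hc0 hcac _).mp s1.2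
    rwa [he2] at h
  have s2 : ((e:ℤ) * c') • x ∈ zmultiples x ⊓ zmultiples y := by
    rw [hM12]
    exact ⟨zsmul_mem (mem_zmultiples x) _,
      (meetMem g a' c' x z hx1 hz1 hg0 hc0 hcac _).mpr (by rw [he2])⟩
  have s2' : (e:ℤ) * b' ∣ (e:ℤ) * c' := by
    have h := (meetMem g a' b' x y hx1 hy1 hg0 hb0 hcab _).mp s2.2
    rwa [← hedef] at h
  have hbc' : b' = c' :=
    Int.dvd_antisymm hbpos.le hcpos.le ((mul_dvd_mul_iff_left he0).mp s2')
      ((mul_dvd_mul_iff_left he0).mp s1')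
  -- y-side: a' = c'
  have s3 : ((e:ℤ) * a') • y ∈ zmultiples y ⊓ zmultiples z := by
    rw [← hM13]
    exact ⟨(meetMem g b' a' y x hy1 hx1 hg0 ha0 hcab.symm _).mpr (by rw [he4]),
      zsmul_mem (mem_zmultiples y) _⟩
  have s3' : (e:ℤ) * c' ∣ (e:ℤ) * a' := by
    have h := (meetMem g b' c' y z hy1 hz1 hg0 hc0 hcbc _).mp s3.2
    rwa [he3] at h
  have s4 : ((e:ℤ) * c') • y ∈ zmultiples x ⊓ zmultiples y := by
    rw [hM13]
    exact ⟨zsmul_mem (mem_zmultiples y) _,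
      (meetMem g b' c' y z hy1 hz1 hg0 hc0 hcbc _).mpr (by rw [he3])⟩
  have s4' : (e:ℤ) * a' ∣ (e:ℤ) * c' := by
    have h := (meetMem g b' a' y x hy1 hx1 hg0 ha0 hcab.symm _).mp s4.1
    rwa [he4] at h
  have hac' : a' = c' :=
    Int.dvd_antisymm hapos.le hcpos.le ((mul_dvd_mul_iff_left he0).mp s4')
      ((mul_dvd_mul_iff_left he0).mp s3')
  -- all reduced coordinates are 1
  have hab' : a' = b' := hac'.trans hbc'.symm
  have ha1 : a' = 1 := by
    rw [← hab'] at hcab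
    have hu := hcab.isUnit_of_dvd dvd_rfl
    rcases Int.isUnit_iff.mp hu with h | h
    · exact h
    · omega
  have hb1 : b' = 1 := by omega
  have hc1 : c' = 1 := by omega
  rw [ha1, hb1, hc1] at hU12 hU13
  simp only [one_zsmul] at hU12 hU13
  -- final contradiction via the 2-adic lemma
  have hdiffeq : zmultiples ((x.2 - y.2) - (x.2 - z.2)) = zmultiples (x.2 - y.2) := by
    rw [show (x.2 - y.2) - (x.2 - z.2) = -(y.2 - z.2) by ring, zmul_neg, ← hU13]
  have hL := keyL (x.2 - y.2) (x.2 - z.2) hU12 hdiffeq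
  apply hAB
  have hxy : x = y := by
    rw [Prod.ext_iff]
    exact ⟨by rw [hx1, hy1, ha1, hb1], sub_eq_zero.mp hL⟩
  rw [hxy]

end Stmt18Aux


theorem stmt_18 (N : ℕ) :
    ¬ ∃ (H A B C D : AddSubgroup (ℤ × ZMod (2 ^ N))),
      (∃ x, A = AddSubgroup.zmultiples x) ∧ (∃ y, B = AddSubgroup.zmultiples y) ∧
      (∃ z, C = AddSubgroup.zmultiples z) ∧ (∃ w, D = AddSubgroup.zmultiples w) ∧
      A ≠ B ∧ A ≠ C ∧ B ≠ C ∧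
      A ⊔ B = H ∧ A ⊔ C = H ∧ B ⊔ C = H ∧
      A ⊓ B = D ∧ A ⊓ C = D ∧ B ⊓ C = D := by
  open AddSubgroup Stmt18Aux in
  rintro ⟨H, A, B, C, D, ⟨x, hA⟩, ⟨y, hB⟩, ⟨z, hC⟩, ⟨w, hD⟩, hAB, hAC, hBC,
    hj1, hj2, hj3, hm1, hm2, hm3⟩
  subst hA hB hC
  have hJ12 : zmultiples x ⊔ zmultiples y = zmultiples x ⊔ zmultiples z := hj1.trans hj2.symm
  have hJ13 : zmultiples x ⊔ zmultiples y = zmultiples y ⊔ zmultiples z := hj1.trans hj3.symm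
  have hM12 : zmultiples x ⊓ zmultiples y = zmultiples x ⊓ zmultiples z := hm1.trans hm2.symm
  have hM13 : zmultiples x ⊓ zmultiples y = zmultiples y ⊓ zmultiples z := hm1.trans hm3.symm
  have hzmem : z ∈ zmultiples x ⊔ zmultiples y := by
    rw [hJ12]; exact AddSubgroup.mem_sup_right (mem_zmultiples z)
  have hymem : y ∈ zmultiples x ⊔ zmultiples z := by
    rw [← hJ12]; exact AddSubgroup.mem_sup_right (mem_zmultiples y)
  have hxmem : x ∈ zmultiples y ⊔ zmultiples z := by
    rw [← hJ13]; exact AddSubgroup.mem_sup_left (mem_zmultiples x)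
  obtain ⟨k1, l1, hzc⟩ : ∃ k l : ℤ, z.1 = k * x.1 + l * y.1 := by
    obtain ⟨p, ⟨k, rfl⟩, q, ⟨l, rfl⟩, hd⟩ := AddSubgroup.mem_sup.mp hzmem
    exact ⟨k, l, by rw [← hd]; simp [smul_eq_mul]⟩
  obtain ⟨k2, l2, hyc⟩ : ∃ k l : ℤ, y.1 = k * x.1 + l * z.1 := by
    obtain ⟨p, ⟨k, rfl⟩, q, ⟨l, rfl⟩, hd⟩ := AddSubgroup.mem_sup.mp hymem
    exact ⟨k, l, by rw [← hd]; simp [smul_eq_mul]⟩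
  obtain ⟨k3, l3, hxc⟩ : ∃ k l : ℤ, x.1 = k * y.1 + l * z.1 := by
    obtain ⟨p, ⟨k, rfl⟩, q, ⟨l, rfl⟩, hd⟩ := AddSubgroup.mem_sup.mp hxmem
    exact ⟨k, l, by rw [← hd]; simp [smul_eq_mul]⟩
  by_cases hx0 : x.1 = 0 <;> by_cases hy0 : y.1 = 0 <;> by_cases hz0 : z.1 = 0
  · -- all zero: chain case
    exact chainCase x y z hx0 hy0 hAB hJ12 hJ13 hM12 hM13
  · -- x = y = 0, z ≠ 0
    exact hz0 (by rw [hzc, hx0, hy0]; ring)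
  · -- x = z = 0, y ≠ 0
    exact hy0 (by rw [hyc, hx0, hz0]; ring)
  · -- x = 0, y,z ≠ 0
    refine oneZero x y z hx0 hy0 hz0 ?_
    rw [← hM13]
    exact inf_le_left
  · -- y = z = 0, x ≠ 0
    exact hx0 (by rw [hxc, hy0, hz0]; ring)
  · -- y = 0, x,z ≠ 0
    refine oneZero y x z hy0 hx0 hz0 ?_
    rw [← hM12]
    exact inf_le_right
  · -- z = 0, x,y ≠ 0
    refine oneZero z x y hz0 hx0 hy0 ?_
    rw [hM12]
    exact inf_le_right
  · -- main case
    obtain ⟨x', hx', hxe⟩ := norm x hx0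
    obtain ⟨y', hy', hye⟩ := norm y hy0
    obtain ⟨z', hz', hze⟩ := norm z hz0
    rw [hxe, hye] at hAB
    rw [hxe, hye, hze] at hJ12 hJ13 hM12 hM13
    exact mainCase x' y' z' hx' hy' hz' hAB hJ12 hJ13 hM12 hM13
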